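/- arXiv:math/9906210 — 2 statements merged into one kernel-verified Lean document; each statement's English description precedes it below -/
import Mathlib

section
/- Let A be an irreducible nonnegative Σ×Σ matrix with Perron eigenvalue r(A) and let σ be the Markov (Parry) measure on the subshift X_A determined by the Perron–Frobenius left and right eigenvectors. Then σ is invariant under the shift σ_A and the measure-theoretic entropy H_σ(σ_A) equals log r(A). -/
open MeasureTheory

section Aux

variable {S : Type*} [Fintype S] [DecidableEq S] [MeasurableSpace S] [MeasurableSingletonClass S]

def cylSet (n : ℕ) (w : Fin n → S) : Set (ℕ → S) := {x | ∀ p : Fin n, x p = w p}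

lemma measurableSet_cylSet (n : ℕ) (w : Fin n → S) : MeasurableSet (cylSet n w) := by
  have : cylSet n w = ⋂ p : Fin n, (fun x : ℕ → S => x p) ⁻¹' {w p} := by
    ext x; simp [cylSet]
  rw [this]
  exact MeasurableSet.iInter fun p => (measurable_pi_apply _) (measurableSet_singleton _)

lemma disjoint_cylSet {n : ℕ} {w w' : Fin n → S} (h : w ≠ w') :
    Disjoint (cylSet n w) (cylSet n w') := by
  rw [Set.disjoint_left]
  intro x hx hx'
  exact h (funext fun p => (hx p).symm.trans (hx' p))

lemma iUnion_cylSet (n : ℕ) : ⋃ w : Fin n → S, cylSet n w = Set.univ := by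
  ext x
  simp only [Set.mem_iUnion, Set.mem_univ, iff_true]
  exact ⟨fun p => x p, fun p => rfl⟩

lemma sum_measure_cylSet (μ : Measure (ℕ → S)) (n : ℕ) :
    ∑ w : Fin n → S, μ (cylSet n w) = μ Set.univ := by
  rw [← iUnion_cylSet (S := S) n, measure_iUnion (fun w w' h => disjoint_cylSet h)
    (fun w => measurableSet_cylSet n w), tsum_fintype]

/-- The cylinder sets of positive length form a π-system. -/
lemma isPiSystem_cylSet :
    IsPiSystem {s : Set (ℕ → S) | ∃ (n : ℕ) (w : Fin (n+1) → S), s = cylSet (n+1) w} := by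
  have key : ∀ (n m : ℕ) (w : Fin (n+1) → S) (w' : Fin (m+1) → S), n ≤ m →
      (cylSet (n+1) w ∩ cylSet (m+1) w').Nonempty →
      cylSet (n+1) w ∩ cylSet (m+1) w' = cylSet (m+1) w' := by
    intro n m w w' hnm ⟨x, hx, hx'⟩
    apply Set.inter_eq_self_of_subset_right
    intro y hy p
    have h1 : ((p : ℕ) : ℕ) < m + 1 := lt_of_lt_of_le p.2 (by omega)
    calc y p = y ((⟨(p : ℕ), h1⟩ : Fin (m+1)) : ℕ) := rfl
      _ = w' ⟨(p : ℕ), h1⟩ := hy _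
      _ = x ((⟨(p : ℕ), h1⟩ : Fin (m+1)) : ℕ) := (hx' _).symm
      _ = x p := rfl
      _ = w p := hx p
  rintro s ⟨n, w, rfl⟩ t ⟨m, w', rfl⟩ hne
  rcases le_total n m with h | h
  · rw [key n m w w' h hne]
    exact ⟨m, w', rfl⟩
  · rw [Set.inter_comm] at hne ⊢
    rw [key m n w' w h hne]
    exact ⟨n, w, rfl⟩

/-- The cylinder sets of positive length generate the product σ-algebra. -/
lemma generateFrom_cylSet :
    (MeasurableSpace.pi : MeasurableSpace (ℕ → S)) =
      MeasurableSpace.generateFrom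
        {s : Set (ℕ → S) | ∃ (n : ℕ) (w : Fin (n+1) → S), s = cylSet (n+1) w} := by
  set C : Set (Set (ℕ → S)) :=
    {s : Set (ℕ → S) | ∃ (n : ℕ) (w : Fin (n+1) → S), s = cylSet (n+1) w} with hC
  apply le_antisymm
  · apply iSup_le
    intro i
    have hsing : ∀ s : S, MeasurableSet[MeasurableSpace.generateFrom C]
        ((fun x : ℕ → S => x i) ⁻¹' {s}) := by
      intro s
      have : (fun x : ℕ → S => x i) ⁻¹' {s}
          = ⋃ (w : Fin (i+1) → S) (_ : w (Fin.last i) = s), cylSet (i+1) w := by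
        ext x
        simp only [Set.mem_preimage, Set.mem_singleton_iff, Set.mem_iUnion, cylSet,
          Set.mem_setOf_eq]
        constructor
        · intro h
          refine ⟨fun p => x p, ?_, fun p => rfl⟩
          rw [← h]; simp [Fin.val_last]
        · rintro ⟨w, hw, h⟩
          rw [← hw]
          have := h (Fin.last i)
          simpa [Fin.val_last] using this
      rw [this]
      exact MeasurableSet.iUnion fun w => MeasurableSet.iUnion fun hw =>
        MeasurableSpace.measurableSet_generateFrom ⟨i, w, rfl⟩
    rw [MeasurableSpace.le_def]
    intro t ht
    obtain ⟨t', -, rfl⟩ := ht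
    have hrw : (fun x : ℕ → S => x i) ⁻¹' t'
        = ⋃ a ∈ t', (fun x : ℕ → S => x i) ⁻¹' {a} := by
      ext x; simp
    rw [hrw]
    exact MeasurableSet.biUnion t'.to_countable (fun a _ => hsing a)
  · apply MeasurableSpace.generateFrom_le
    rintro s ⟨n, w, rfl⟩
    exact measurableSet_cylSet _ _

end Aux

/-- The Kolmogorov–Sinai entropy of a shift-invariant measure on `Σ^ℕ`, computed via the
(generating) partitions into cylinder sets of length `n`. -/
noncomputable def shiftKSEntropy {S : Type*} [Fintype S] [MeasurableSpace S]
    (μ : Measure (ℕ → S)) : ℝ :=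
  Filter.limsup (fun n : ℕ =>
    (∑ w : Fin n → S, Real.negMulLog (μ {x : ℕ → S | ∀ p : Fin n, x p = w p}).toReal) / n)
    Filter.atTop

/-- for an irreducible `{0,1}`-matrix `A` with Perron eigenvalue `r` and positive
left/right eigenvectors `u, v` normalized by `∑ uᵢvᵢ = 1`, the Parry (Markov) measure—assigning
`u_{i₀} v_{i_k} A(i₀,i₁)⋯A(i_{k-1},i_k) / r^k` to cylinders—is shift-invariant and its
measure-theoretic entropy equals `log r`. -/
theorem parry_measure_invariant_and_entropy {S : Type*} [Fintype S] [DecidableEq S] [Nonempty S]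
    [MeasurableSpace S] [MeasurableSingletonClass S]
    (A : Matrix S S ℝ) (hA : ∀ i j, A i j = 0 ∨ A i j = 1)
    (hirr : ∀ i j, ∃ k : ℕ, 1 ≤ k ∧ (A ^ k) i j ≠ 0)
    (r : ℝ) (hr : 0 < r) (u v : S → ℝ) (hu : ∀ i, 0 < u i) (hv : ∀ i, 0 < v i)
    (huA : Matrix.vecMul u A = r • u) (hAv : A.mulVec v = r • v)
    (hnorm : ∑ i, u i * v i = 1)
    (μ : Measure (ℕ → S)) [IsProbabilityMeasure μ]
    (hμ : ∀ (n : ℕ) (w : Fin (n + 1) → S),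
      μ {x : ℕ → S | ∀ p : Fin (n + 1), x p = w p}
        = ENNReal.ofReal
            (u (w 0) * v (w (Fin.last n)) * (∏ p : Fin n, A (w p.castSucc) (w p.succ)) / r ^ n)) :
    MeasurePreserving (fun (x : ℕ → S) (k : ℕ) => x (k + 1)) μ μ ∧
    shiftKSEntropy μ = Real.log r := by
  have hμ' : ∀ (n : ℕ) (w : Fin (n + 1) → S),
      μ (cylSet (n+1) w) = ENNReal.ofReal
        (u (w 0) * v (w (Fin.last n)) * (∏ p : Fin n, A (w p.castSucc) (w p.succ)) / r ^ n) :=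
    hμ
  have hA0 : ∀ i j, 0 ≤ A i j := fun i j => by rcases hA i j with h | h <;> simp [h]
  have hrne : r ≠ 0 := ne_of_gt hr
  have hP : ∀ (n : ℕ) (w : Fin (n+1) → S),
      (∏ p : Fin n, A (w p.castSucc) (w p.succ)) = 0 ∨
      (∏ p : Fin n, A (w p.castSucc) (w p.succ)) = 1 := by
    intro n w
    by_cases h : ∀ p : Fin n, A (w p.castSucc) (w p.succ) = 1
    · right; exact Finset.prod_eq_one fun p _ => h p
    · left
      push_neg at h
      obtain ⟨p, hp⟩ := h
      exact Finset.prod_eq_zero (Finset.mem_univ p) ((hA _ _).resolve_right hp)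
  set f : ∀ _ : ℕ, (Fin (_ + 1) → S) → ℝ := fun n w =>
    u (w 0) * v (w (Fin.last n)) * (∏ p : Fin n, A (w p.castSucc) (w p.succ)) / r ^ n with hf
  have hfnonneg : ∀ n w, 0 ≤ f n w := by
    intro n w
    apply div_nonneg _ (le_of_lt (pow_pos hr n))
    exact mul_nonneg (mul_nonneg (hu _).le (hv _).le) (Finset.prod_nonneg fun p _ => hA0 _ _)
  have htoReal : ∀ n w, (μ (cylSet (n+1) w)).toReal = f n w := by
    intro n w
    rw [hμ' n w, ENNReal.toReal_ofReal (hfnonneg n w)]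
  have hsumf : ∀ n, ∑ w : Fin (n+1) → S, f n w = 1 := by
    intro n
    have h1 : ∑ w : Fin (n+1) → S, μ (cylSet (n+1) w) = 1 := by
      rw [sum_measure_cylSet, measure_univ]
    have h2 := congrArg ENNReal.toReal h1
    rwa [ENNReal.toReal_sum (fun w _ => by rw [hμ']; exact ENNReal.ofReal_ne_top),
      ENNReal.toReal_one, Finset.sum_congr rfl (fun w _ => htoReal n w)] at h2
  -- shift invariance
  have hTmeas : Measurable (fun (x : ℕ → S) (k : ℕ) => x (k + 1)) :=
    measurable_pi_iff.mpr fun k => measurable_pi_apply (k+1)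
  have hpre : ∀ (n : ℕ) (w : Fin (n+1) → S),
      (fun (x : ℕ → S) (k : ℕ) => x (k + 1)) ⁻¹' cylSet (n+1) w
        = ⋃ s : S, cylSet (n+2) (Fin.cons s w) := by
    intro n w
    ext x
    simp only [Set.mem_preimage, Set.mem_iUnion, cylSet, Set.mem_setOf_eq]
    constructor
    · intro h
      refine ⟨x 0, fun q => ?_⟩
      refine Fin.cases ?_ (fun p => ?_) q
      · simp
      · simpa [Fin.val_succ] using h p
    · rintro ⟨s, hs⟩ p
      simpa [Fin.val_succ] using hs p.succ
  have hcons0 : ∀ (n : ℕ) (s : S) (w : Fin (n+1) → S), (Fin.cons s w : Fin (n+2) → S) 0 = s :=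
    fun n s w => rfl
  have hmapcyl : ∀ (n : ℕ) (w : Fin (n+1) → S),
      Measure.map (fun (x : ℕ → S) (k : ℕ) => x (k + 1)) μ (cylSet (n+1) w)
        = μ (cylSet (n+1) w) := by
    intro n w
    rw [Measure.map_apply hTmeas (measurableSet_cylSet _ _), hpre n w,
      measure_iUnion
        (fun s s' hss' => disjoint_cylSet (fun h => hss' (by
          have := congrFun h 0
          simpa using this)))
        (fun s => measurableSet_cylSet _ _),
      tsum_fintype]
    set P : ℝ := ∏ p : Fin n, A (w p.castSucc) (w p.succ) with hPdef
    have hterm : ∀ s : S, μ (cylSet (n+2) (Fin.cons s w))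
        = ENNReal.ofReal ((u s * A s (w 0)) * (v (w (Fin.last n)) * P) / r ^ (n+1)) := by
      intro s
      rw [hμ' (n+1) (Fin.cons s w)]
      congr 1
      have h0 : (Fin.cons s w : Fin (n+2) → S) 0 = s := rfl
      have hlast : (Fin.cons s w : Fin (n+2) → S) (Fin.last (n+1)) = w (Fin.last n) := by
        rw [← Fin.succ_last, Fin.cons_succ]
      have hprod : (∏ p : Fin (n+1), A ((Fin.cons s w : Fin (n+2) → S) p.castSucc)
            ((Fin.cons s w : Fin (n+2) → S) p.succ))
          = A s (w 0) * P := by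
        rw [Fin.prod_univ_succ, hPdef]
        simp only [← Fin.succ_castSucc, Fin.cons_succ, Fin.castSucc_zero, Fin.cons_zero]
      rw [h0, hlast, hprod]
      ring
    have hsum : ∑ s : S, u s * A s (w 0) = r * u (w 0) := by
      have := congrFun huA (w 0)
      simpa [Matrix.vecMul, dotProduct, mul_comm] using this
    rw [Finset.sum_congr rfl (fun s _ => hterm s), hμ' n w]
    rw [← ENNReal.ofReal_sum_of_nonneg (fun s _ => by
      apply div_nonneg _ (pow_pos hr (n+1)).le
      exact mul_nonneg (mul_nonneg (hu s).le (hA0 s (w 0)))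
        (mul_nonneg (hv _).le (Finset.prod_nonneg fun p _ => hA0 _ _)))]
    congr 1
    rw [← Finset.sum_div, ← Finset.sum_mul, hsum, ← hPdef, pow_succ]
    field_simp
  have hmap : Measure.map (fun (x : ℕ → S) (k : ℕ) => x (k + 1)) μ = μ := by
    have : IsProbabilityMeasure (Measure.map (fun (x : ℕ → S) (k : ℕ) => x (k + 1)) μ) :=
      Measure.isProbabilityMeasure_map hTmeas.aemeasurable
    refine ext_of_generate_finite _ generateFrom_cylSet isPiSystem_cylSet ?_ (by simp)
    rintro s ⟨n, w, rfl⟩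
    exact hmapcyl n w
  refine ⟨⟨hTmeas, hmap⟩, ?_⟩
  -- entropy
  obtain ⟨M, hM⟩ := Finite.exists_le fun ij : S × S => |Real.log (u ij.1 * v ij.2)|
  have hM0 : 0 ≤ M := le_trans (abs_nonneg _) (hM (Classical.arbitrary _, Classical.arbitrary _))
  set E : ℕ → ℝ := fun n => ∑ w : Fin (n+1) → S, f n w * Real.log (u (w 0) * v (w (Fin.last n)))
    with hE
  have hEbound : ∀ n, |E n| ≤ M := by
    intro n
    calc |E n| ≤ ∑ w : Fin (n+1) → S, |f n w * Real.log (u (w 0) * v (w (Fin.last n)))| :=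
          Finset.abs_sum_le_sum_abs _ _
      _ ≤ ∑ w : Fin (n+1) → S, f n w * M := by
          apply Finset.sum_le_sum
          intro w _
          rw [abs_mul, abs_of_nonneg (hfnonneg n w)]
          exact mul_le_mul_of_nonneg_left (hM (w 0, w (Fin.last n))) (hfnonneg n w)
      _ = M := by rw [← Finset.sum_mul, hsumf n, one_mul]
  have hH : ∀ n : ℕ, ∑ w : Fin (n+1) → S, Real.negMulLog (f n w)
      = n * Real.log r - E n := by
    intro n
    have hterm : ∀ w : Fin (n+1) → S, Real.negMulLog (f n w)
        = (n * Real.log r) * f n w - f n w * Real.log (u (w 0) * v (w (Fin.last n))) := by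
      intro w
      rcases hP n w with h | h
      · have : f n w = 0 := by simp only [hf]; rw [h]; simp
        simp [this]
      · have hfw : f n w = u (w 0) * v (w (Fin.last n)) / r ^ n := by
          simp only [hf]; rw [h, mul_one]
        have hpos : 0 < u (w 0) * v (w (Fin.last n)) := mul_pos (hu _) (hv _)
        have hlog : Real.log (f n w)
            = Real.log (u (w 0) * v (w (Fin.last n))) - n * Real.log r := by
          rw [hfw, Real.log_div (ne_of_gt hpos) (ne_of_gt (pow_pos hr n)), Real.log_pow]
        rw [Real.negMulLog, hlog]
        ring
    rw [Finset.sum_congr rfl (fun w _ => hterm w), Finset.sum_sub_distrib, ← Finset.mul_sum,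
      hsumf n, mul_one, hE]
  -- the entropy sequence
  set g : ℕ → ℝ := fun n =>
    (∑ w : Fin n → S, Real.negMulLog (μ {x : ℕ → S | ∀ p : Fin n, x p = w p}).toReal) / n
    with hg
  have hgsucc : ∀ n : ℕ, g (n+1) = ((n : ℝ) * Real.log r - E n) / ((n : ℝ) + 1) := by
    intro n
    show (∑ w : Fin (n+1) → S,
        Real.negMulLog (μ (cylSet (n+1) w)).toReal) / ((n + 1 : ℕ) : ℝ) = _
    rw [Finset.sum_congr rfl (fun w _ => by rw [htoReal n w]), hH n]
    push_cast
    ring_nf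
  have hgtend : Filter.Tendsto g Filter.atTop (nhds (Real.log r)) := by
    have hdiff : Filter.Tendsto (fun n : ℕ => g n - Real.log r) Filter.atTop (nhds 0) := by
      apply squeeze_zero_norm' (a := fun n : ℕ => (M + |Real.log r|) / n)
      · filter_upwards [Filter.eventually_ge_atTop 1] with n hn
        obtain ⟨m, rfl⟩ := Nat.exists_eq_add_of_le hn
        have h1 : (0:ℝ) < (m:ℝ) + 1 := by positivity
        have hgm : g (1 + m) - Real.log r = (-(Real.log r + E m)) / ((m:ℝ)+1) := by
          rw [show 1 + m = m + 1 from by omega, hgsucc m]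
          field_simp
          ring
        have hcast : ((1 + m : ℕ) : ℝ) = (m : ℝ) + 1 := by push_cast; ring
        rw [Real.norm_eq_abs, hgm, abs_div, abs_of_pos h1, hcast]
        have habs : |(-(Real.log r + E m))| ≤ M + |Real.log r| := by
          rw [abs_neg]
          calc |Real.log r + E m| ≤ |Real.log r| + |E m| := abs_add_le _ _
            _ ≤ M + |Real.log r| := by have := hEbound m; linarith
        gcongr
      · exact tendsto_const_div_atTop_nhds_zero_nat _
    have := hdiff.add (tendsto_const_nhds (x := Real.log r))
    simpa using this
  rw [show Real.log r = Real.log r from rfl]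
  exact hgtend.limsup_eq
end

section
/- Variational principle consequence for subshifts of finite type: for an irreducible {0,1}-matrix A, the measure-theoretic entropy of the shift σ_A with respect to any shift-invariant Borel probability measure σ on X_A is at most log r(A), with equality for the Parry measure. -/
open MeasureTheory

open Filter Topology ENNReal

section AuxVPS

variable {S : Type*} [Fintype S] [DecidableEq S] [Nonempty S]


lemma cyl_meas [MeasurableSpace S] [MeasurableSingletonClass S] (n : ℕ) (w : Fin n → S) :
    MeasurableSet {x : ℕ → S | ∀ p : Fin n, x p = w p} := by
  have h : {x : ℕ → S | ∀ p : Fin n, x p = w p}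
      = ⋂ p : Fin n, (fun x : ℕ → S => x (p : ℕ)) ⁻¹' {w p} := by
    ext x; simp [Set.mem_iInter]
  rw [h]
  exact MeasurableSet.iInter fun p => (measurable_pi_apply _) (measurableSet_singleton _)

lemma sum_measure_cyl [MeasurableSpace S] [MeasurableSingletonClass S]
    (μ : Measure (ℕ → S)) [IsProbabilityMeasure μ] (n : ℕ) :
    ∑ w : Fin n → S, μ {x : ℕ → S | ∀ p : Fin n, x p = w p} = 1 := by
  have hdisj : Pairwise (Function.onFun Disjoint
      fun w : Fin n → S => {x : ℕ → S | ∀ p : Fin n, x p = w p}) := by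
    intro w w' hww'
    rw [Function.onFun, Set.disjoint_left]
    intro x hx hx'
    exact hww' (funext fun p => (hx p).symm.trans (hx' p))
  have huniv : (⋃ w : Fin n → S, {x : ℕ → S | ∀ p : Fin n, x p = w p}) = Set.univ := by
    ext x
    simp only [Set.mem_iUnion, Set.mem_univ, iff_true]
    exact ⟨fun p => x (p : ℕ), fun p => rfl⟩
  have := measure_iUnion (μ := μ) hdisj (fun w => cyl_meas n w)
  rw [huniv, measure_univ, tsum_fintype] at this
  exact this.symm

lemma pathsum (A : Matrix S S ℝ) : ∀ (n : ℕ) (i : S),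
    (∑ w : Fin n → S, ∏ p : Fin n,
      A ((Fin.cons i w : Fin (n+1) → S) p.castSucc) ((Fin.cons i w : Fin (n+1) → S) p.succ))
      = ∑ j, (A ^ n) i j := by
  intro n
  induction n with
  | zero => intro i; simp [Matrix.one_apply]
  | succ n ih =>
    intro i
    rw [← Equiv.sum_comp (Fin.consEquiv fun _ : Fin (n + 1) => S), Fintype.sum_prod_type]
    have hterm : ∀ (k : S) (w' : Fin n → S),
        (∏ p : Fin (n+1),
          A ((Fin.cons i (Fin.cons k w' : Fin (n+1) → S) : Fin (n+2) → S) p.castSucc)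
            ((Fin.cons i (Fin.cons k w' : Fin (n+1) → S) : Fin (n+2) → S) p.succ))
        = A i k * ∏ p : Fin n,
            A ((Fin.cons k w' : Fin (n+1) → S) p.castSucc)
              ((Fin.cons k w' : Fin (n+1) → S) p.succ) := by
      intro k w'
      rw [Fin.prod_univ_succ]
      congr 1
    calc (∑ k : S, ∑ w' : Fin n → S, ∏ p : Fin (n+1),
            A ((Fin.cons i (Fin.cons k w' : Fin (n+1) → S) : Fin (n+2) → S) p.castSucc)
              ((Fin.cons i (Fin.cons k w' : Fin (n+1) → S) : Fin (n+2) → S) p.succ))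
        = ∑ k : S, A i k * ∑ j, (A ^ n) k j := by
          apply Finset.sum_congr rfl; intro k _
          rw [← ih k, Finset.mul_sum]
          exact Finset.sum_congr rfl fun w' _ => hterm k w'
      _ = ∑ j, (A ^ (n+1)) i j := by
          rw [pow_succ']
          simp_rw [Matrix.mul_apply, Finset.mul_sum]
          rw [Finset.sum_comm]
      _ = _ := rfl

lemma sum_prod_all (A : Matrix S S ℝ) (n : ℕ) :
    (∑ w : Fin (n+1) → S, ∏ p : Fin n, A (w p.castSucc) (w p.succ))
      = ∑ i, ∑ j, (A ^ n) i j := by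
  rw [← Equiv.sum_comp (Fin.consEquiv fun _ : Fin (n+1) => S), Fintype.sum_prod_type]
  simp only [Fin.consEquiv_apply]
  exact Finset.sum_congr rfl fun i _ => pathsum A n i

lemma sum_negMulLog_le_log_card {ι : Type*} (t : Finset ι) (p : ι → ℝ)
    (hp : ∀ i ∈ t, 0 ≤ p i) (hsum : ∑ i ∈ t, p i = 1) :
    ∑ i ∈ t, Real.negMulLog (p i) ≤ Real.log t.card := by
  have ht : t.Nonempty := by
    by_contra h
    rw [Finset.not_nonempty_iff_eq_empty] at h
    simp [h] at hsum
  have hN : (0:ℝ) < t.card := Nat.cast_pos.mpr ht.card_pos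
  have hj := Real.concaveOn_negMulLog.le_map_sum (t := t) (w := fun _ => ((t.card : ℝ))⁻¹)
    (p := p) (fun i _ => by positivity)
    (by rw [Finset.sum_const, nsmul_eq_mul]; field_simp)
    (fun i hi => hp i hi)
  simp only [smul_eq_mul, ← Finset.mul_sum, hsum, mul_one] at hj
  rw [Real.negMulLog, Real.log_inv] at hj
  have h2 : ((t.card : ℝ))⁻¹ * ∑ i ∈ t, Real.negMulLog (p i)
      ≤ ((t.card : ℝ))⁻¹ * Real.log t.card := by nlinarith [hj]
  exact (mul_le_mul_iff_right₀ (inv_pos.mpr hN)).mp h2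


lemma pow_entry_nonneg (A : Matrix S S ℝ) (hA0 : ∀ i j, 0 ≤ A i j) :
    ∀ (n : ℕ) (i j : S), 0 ≤ (A ^ n) i j := by
  intro n
  induction n with
  | zero =>
    intro i j
    rw [pow_zero, Matrix.one_apply]
    split <;> norm_num
  | succ n ih =>
    intro i j
    rw [pow_succ, Matrix.mul_apply]
    exact Finset.sum_nonneg fun k _ => mul_nonneg (ih i k) (hA0 k j)

lemma row_has_one (A : Matrix S S ℝ) (hA : ∀ i j, A i j = 0 ∨ A i j = 1)
    (hirr : ∀ i j, ∃ k : ℕ, 1 ≤ k ∧ (A ^ k) i j ≠ 0) (i : S) : ∃ j, A i j = 1 := by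
  by_contra h
  push_neg at h
  have hrow : ∀ j, A i j = 0 := fun j => (hA i j).resolve_right (h j)
  obtain ⟨k, hk1, hk⟩ := hirr i i
  obtain ⟨m, rfl⟩ := Nat.exists_eq_add_of_le hk1
  apply hk
  rw [add_comm, pow_succ', Matrix.mul_apply]
  exact Finset.sum_eq_zero fun l _ => by rw [hrow l, zero_mul]

lemma rowsum_ge_one (A : Matrix S S ℝ) (hA0 : ∀ i j, 0 ≤ A i j)
    (hrow : ∀ i, ∃ j, A i j = 1) : ∀ (n : ℕ) (i : S), 1 ≤ ∑ j, (A ^ n) i j := by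
  intro n
  induction n with
  | zero =>
    intro i
    rw [pow_zero]
    simp [Matrix.one_apply]
  | succ n ih =>
    intro i
    obtain ⟨j0, hj0⟩ := hrow i
    have key : (1:ℝ) ≤ A i j0 * ∑ j, (A ^ n) j0 j := by
      rw [hj0, one_mul]; exact ih j0
    calc (1:ℝ) ≤ A i j0 * ∑ j, (A ^ n) j0 j := key
      _ ≤ ∑ k, A i k * ∑ j, (A ^ n) k j := by
          apply Finset.single_le_sum (f := fun k => A i k * ∑ j, (A ^ n) k j)
            (fun k _ => mul_nonneg (hA0 i k)
              (Finset.sum_nonneg fun j _ => pow_entry_nonneg A hA0 n k j))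
            (Finset.mem_univ j0)
      _ = ∑ j, (A ^ (n+1)) i j := by
          rw [pow_succ']
          simp_rw [Matrix.mul_apply, Finset.mul_sum]
          rw [Finset.sum_comm]

section Norms

attribute [local instance] Matrix.linftyOpNormedRing Matrix.linftyOpNormedAlgebra
  Matrix.linftyOpNormedSpace

lemma norm_map_ofReal (M : Matrix S S ℝ) : ‖M.map Complex.ofReal‖ = ‖M‖ := by
  rw [Matrix.linfty_opNorm_def, Matrix.linfty_opNorm_def]
  congr 1
  apply Finset.sup_congr rfl
  intro i _
  apply Finset.sum_congr rfl
  intro j _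
  rw [Matrix.map_apply, Complex.nnnorm_real]

lemma rowsum_le_norm (M : Matrix S S ℝ) (i : S) : ∑ j, ‖M i j‖ ≤ ‖M‖ := by
  rw [Matrix.linfty_opNorm_def]
  have h := Finset.le_sup (f := fun i : S => ∑ j : S, ‖M i j‖₊) (Finset.mem_univ i)
  have h2 : ((∑ j : S, ‖M i j‖₊ : NNReal) : ℝ)
      ≤ (((Finset.univ : Finset S).sup fun i : S => ∑ j : S, ‖M i j‖₊ : NNReal) : ℝ) := by
    exact_mod_cast h
  simpa [NNReal.coe_sum] using h2

lemma norm_le_total (M : Matrix S S ℝ) : ‖M‖ ≤ ∑ i, ∑ j, ‖M i j‖ := by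
  rw [Matrix.linfty_opNorm_def]
  have h : ((Finset.univ : Finset S).sup fun i : S => ∑ j : S, ‖M i j‖₊)
      ≤ ∑ i, ∑ j : S, ‖M i j‖₊ := by
    apply Finset.sup_le
    intro i _
    exact Finset.single_le_sum (f := fun i => ∑ j : S, ‖M i j‖₊) (fun _ _ => zero_le)
      (Finset.mem_univ i)
  calc (((Finset.univ : Finset S).sup fun i : S => ∑ j : S, ‖M i j‖₊ : NNReal) : ℝ)
      ≤ ((∑ i, ∑ j : S, ‖M i j‖₊ : NNReal) : ℝ) := by exact_mod_cast h
    _ = ∑ i, ∑ j, ‖M i j‖ := by push_cast; rfl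

lemma tendsto_log_norm_pow (B : Matrix S S ℂ) (h1 : ∀ n : ℕ, 1 ≤ ‖B ^ n‖) :
    Tendsto (fun n : ℕ => Real.log ‖B ^ n‖ / n) atTop
      (𝓝 (Real.log (spectralRadius ℂ B).toReal)) := by
  have hcs : CompleteSpace (Matrix S S ℂ) := FiniteDimensional.complete ℂ _
  have hg := spectrum.pow_nnnorm_pow_one_div_tendsto_nhds_spectralRadius B
  have hfin : spectralRadius ℂ B ≠ ⊤ :=
    ne_top_of_le_ne_top ENNReal.coe_ne_top (spectrum.spectralRadius_le_nnnorm B)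
  have hreal : Tendsto (fun n : ℕ => ‖B ^ n‖ ^ ((1 : ℝ) / n)) atTop
      (𝓝 (spectralRadius ℂ B).toReal) := by
    have := (ENNReal.tendsto_toReal hfin).comp hg
    convert this using 2 with n
    rw [Function.comp_apply, ← ENNReal.toReal_rpow]
    simp
  have hρ1 : 1 ≤ (spectralRadius ℂ B).toReal := by
    apply ge_of_tendsto hreal
    filter_upwards with n
    exact Real.one_le_rpow (h1 n) (by positivity)
  have hlog := (Real.continuousAt_log (by linarith)).tendsto.comp hreal
  convert hlog using 2 with n
  rw [Function.comp_apply, Real.log_rpow (lt_of_lt_of_le zero_lt_one (h1 n))]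
  ring

lemma tendsto_log_total (A : Matrix S S ℝ) (hA0 : ∀ i j, 0 ≤ A i j)
    (hrow : ∀ i, ∃ j, A i j = 1) :
    Tendsto (fun n : ℕ => Real.log (∑ i, ∑ j, (A ^ n) i j) / n) atTop
      (𝓝 (Real.log ((spectralRadius ℂ (A.map Complex.ofReal)).toReal))) := by
  set B := A.map Complex.ofReal with hB
  have hBpow : ∀ n : ℕ, B ^ n = (A ^ n).map Complex.ofReal := by
    intro n
    have h := map_pow (RingHom.mapMatrix (m := S) Complex.ofRealHom) A n
    exact h.symm
  have hnormB : ∀ n : ℕ, ‖B ^ n‖ = ‖A ^ n‖ := fun n => by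
    rw [hBpow n, norm_map_ofReal]
  have habs : ∀ (n : ℕ) (i j : S), ‖(A ^ n) i j‖ = (A ^ n) i j := fun n i j => by
    rw [Real.norm_eq_abs, abs_of_nonneg (pow_entry_nonneg A hA0 n i j)]
  have hnorm1 : ∀ n : ℕ, 1 ≤ ‖A ^ n‖ := by
    intro n
    obtain i := Classical.arbitrary S
    calc (1:ℝ) ≤ ∑ j, (A ^ n) i j := rowsum_ge_one A hA0 hrow n i
      _ = ∑ j, ‖(A ^ n) i j‖ := by simp_rw [habs]
      _ ≤ ‖A ^ n‖ := rowsum_le_norm _ i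
  have htot1 : ∀ n : ℕ, 1 ≤ ∑ i, ∑ j, (A ^ n) i j := by
    intro n
    obtain i := Classical.arbitrary S
    calc (1:ℝ) ≤ ∑ j, (A ^ n) i j := rowsum_ge_one A hA0 hrow n i
      _ ≤ ∑ i, ∑ j, (A ^ n) i j :=
          Finset.single_le_sum (f := fun i => ∑ j, (A ^ n) i j)
            (fun i _ => Finset.sum_nonneg fun j _ => pow_entry_nonneg A hA0 n i j)
            (Finset.mem_univ i)
  have hnormle : ∀ n : ℕ, ‖A ^ n‖ ≤ ∑ i, ∑ j, (A ^ n) i j := by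
    intro n
    calc ‖A ^ n‖ ≤ ∑ i, ∑ j, ‖(A ^ n) i j‖ := norm_le_total _
      _ = ∑ i, ∑ j, (A ^ n) i j := by simp_rw [habs]
  have htotle : ∀ n : ℕ, (∑ i, ∑ j, (A ^ n) i j) ≤ (Fintype.card S) * ‖A ^ n‖ := by
    intro n
    calc (∑ i, ∑ j, (A ^ n) i j) = ∑ i, ∑ j, ‖(A ^ n) i j‖ := by simp_rw [habs]
      _ ≤ ∑ _i : S, ‖A ^ n‖ := Finset.sum_le_sum fun i _ => rowsum_le_norm _ i
      _ = (Fintype.card S) * ‖A ^ n‖ := by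
          rw [Finset.sum_const, nsmul_eq_mul, Fintype.card]
  have hlog := tendsto_log_norm_pow B (fun n => (hnorm1 n).trans_eq (hnormB n).symm)
  simp_rw [hnormB] at hlog
  have hcard1 : (1:ℝ) ≤ Fintype.card S := by
    exact_mod_cast Fintype.card_pos
  have hupper : Tendsto (fun n : ℕ =>
      Real.log (Fintype.card S) / n + Real.log ‖A ^ n‖ / n) atTop
      (𝓝 (Real.log ((spectralRadius ℂ B).toReal))) := by
    have h0 := tendsto_const_div_atTop_nhds_zero_nat (Real.log (Fintype.card S))
    have := h0.add hlog
    simpa using this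
  apply tendsto_of_tendsto_of_tendsto_of_le_of_le' hlog hupper
  · filter_upwards with n
    gcongr
    · exact lt_of_lt_of_le zero_lt_one (hnorm1 n)
    · exact hnormle n
  · filter_upwards with n
    have h1 : Real.log (∑ i, ∑ j, (A ^ n) i j)
        ≤ Real.log (Fintype.card S) + Real.log ‖A ^ n‖ := by
      rw [← Real.log_mul (by positivity) (lt_of_lt_of_le zero_lt_one (hnorm1 n)).ne']
      exact Real.log_le_log (lt_of_lt_of_le zero_lt_one (htot1 n)) (htotle n)
    rw [← add_div]
    gcongr

end Norms



lemma specrad_eq (A : Matrix S S ℝ) (hA0 : ∀ i j, 0 ≤ A i j)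
    (r : ℝ) (u v : S → ℝ) (hr : 0 < r) (hu : ∀ i, 0 < u i) (hv : ∀ i, 0 < v i)
    (hAu : Matrix.vecMul u A = r • u) (hAv : A.mulVec v = r • v) :
    spectralRadius ℂ (A.map Complex.ofReal) = ENNReal.ofReal r := by
  set B := A.map Complex.ofReal with hB
  apply le_antisymm
  · rw [spectralRadius]
    apply iSup₂_le
    intro lam hlam
    rw [spectrum.mem_iff, Matrix.isUnit_iff_isUnit_det, isUnit_iff_ne_zero, not_not,
      ← Matrix.exists_mulVec_eq_zero_iff] at hlam
    obtain ⟨x, hx, hmul⟩ := hlam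
    have heig : ∀ j, lam * x j = ∑ k, (A j k : ℂ) * x k := by
      intro j
      have h := congrFun hmul j
      rw [Matrix.sub_mulVec] at h
      have h2 : (algebraMap ℂ (Matrix S S ℂ) lam).mulVec x j - B.mulVec x j = 0 := h
      rw [Matrix.algebraMap_eq_diagonal, Matrix.mulVec_diagonal, sub_eq_zero,
        Pi.algebraMap_apply, Algebra.algebraMap_self_apply] at h2
      rw [h2]
      simp [Matrix.mulVec, dotProduct, hB, Matrix.map_apply]
    have key : ∀ j, ‖lam‖ * ‖x j‖ ≤ ∑ k, A j k * ‖x k‖ := by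
      intro j
      rw [← norm_mul, heig j]
      calc ‖∑ k, (A j k : ℂ) * x k‖ ≤ ∑ k, ‖(A j k : ℂ) * x k‖ := norm_sum_le _ _
        _ = ∑ k, A j k * ‖x k‖ := by
            apply Finset.sum_congr rfl
            intro k _
            rw [norm_mul, Complex.norm_real, Real.norm_eq_abs, abs_of_nonneg (hA0 j k)]
    have hineq : ‖lam‖ * ∑ j, u j * ‖x j‖ ≤ r * ∑ j, u j * ‖x j‖ := by
      calc ‖lam‖ * ∑ j, u j * ‖x j‖ = ∑ j, u j * (‖lam‖ * ‖x j‖) := by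
            rw [Finset.mul_sum]; apply Finset.sum_congr rfl; intro j _; ring
        _ ≤ ∑ j, u j * (∑ k, A j k * ‖x k‖) := by
            apply Finset.sum_le_sum
            intro j _
            exact mul_le_mul_of_nonneg_left (key j) (hu j).le
        _ = ∑ k, (∑ j, u j * A j k) * ‖x k‖ := by
            simp_rw [Finset.mul_sum]
            rw [Finset.sum_comm]
            simp_rw [Finset.sum_mul, mul_assoc]
        _ = ∑ k, r * (u k * ‖x k‖) := by
            apply Finset.sum_congr rfl
            intro k _
            have h3 : ∑ j, u j * A j k = r * u k := by
              have h4 : Matrix.vecMul u A k = (r • u) k := by rw [hAu]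
              simpa [Matrix.vecMul, dotProduct] using h4
            rw [h3, mul_assoc]
        _ = r * ∑ j, u j * ‖x j‖ := by rw [← Finset.mul_sum]
    have hspos : 0 < ∑ j, u j * ‖x j‖ := by
      obtain ⟨j0, hj0⟩ := Function.ne_iff.mp hx
      apply Finset.sum_pos' (fun j _ => mul_nonneg (hu j).le (norm_nonneg _))
      exact ⟨j0, Finset.mem_univ j0, mul_pos (hu j0) (norm_pos_iff.mpr hj0)⟩
    have hle : ‖lam‖ ≤ r := le_of_mul_le_mul_right hineq hspos
    rw [← enorm_eq_nnnorm, ← ofReal_norm]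
    exact ENNReal.ofReal_le_ofReal hle
  · have hmem : (r : ℂ) ∈ spectrum ℂ B := by
      rw [spectrum.mem_iff, Matrix.isUnit_iff_isUnit_det, isUnit_iff_ne_zero, not_not,
        ← Matrix.exists_mulVec_eq_zero_iff]
      refine ⟨fun i => (v i : ℂ), ?_, ?_⟩
      · intro h0
        have := congrFun h0 (Classical.arbitrary S)
        rw [Pi.zero_apply, Complex.ofReal_eq_zero] at this
        exact (hv _).ne' this
      · funext j
        rw [Matrix.sub_mulVec, Pi.sub_apply, Matrix.algebraMap_eq_diagonal,
          Matrix.mulVec_diagonal, Pi.zero_apply, sub_eq_zero, Pi.algebraMap_apply,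
          Algebra.algebraMap_self_apply]
        have hAvj : ∑ k, A j k * v k = r * v j := by
          have : A.mulVec v j = (r • v) j := by rw [hAv]
          simpa [Matrix.mulVec, dotProduct] using this
        have : B.mulVec (fun i => (v i : ℂ)) j = ((∑ k, A j k * v k : ℝ) : ℂ) := by
          simp [Matrix.mulVec, dotProduct, hB, Matrix.map_apply]
        rw [this, hAvj]
        push_cast
        ring
    calc ENNReal.ofReal r = (‖(r : ℂ)‖₊ : ℝ≥0∞) := by
          rw [← enorm_eq_nnnorm, ← ofReal_norm, Complex.norm_real, Real.norm_eq_abs,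
            abs_of_pos hr]
      _ ≤ spectralRadius ℂ B := by
          rw [spectralRadius]
          exact le_iSup₂ (f := fun k (_ : k ∈ spectrum ℂ B) => (‖k‖₊ : ℝ≥0∞)) _ hmem

end AuxVPS

/-- variational principle for subshifts of finite type: for an irreducible
`{0,1}`-matrix `A`, every shift-invariant Borel probability measure on `X_A` has
measure-theoretic entropy at most `log r(A)`, with equality for the Parry measure. -/
theorem variational_principle_subshift {S : Type*} [Fintype S] [DecidableEq S] [Nonempty S]
    [MeasurableSpace S] [MeasurableSingletonClass S]
    (A : Matrix S S ℝ) (hA : ∀ i j, A i j = 0 ∨ A i j = 1)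
    (hirr : ∀ i j, ∃ k : ℕ, 1 ≤ k ∧ (A ^ k) i j ≠ 0) :
    (∀ μ : Measure (ℕ → S), IsProbabilityMeasure μ →
      MeasurePreserving (fun (x : ℕ → S) (k : ℕ) => x (k + 1)) μ μ →
      μ {x : ℕ → S | ∀ k, A (x k) (x (k + 1)) = 1} = 1 →
      shiftKSEntropy μ ≤ Real.log ((spectralRadius ℂ (A.map Complex.ofReal)).toReal)) ∧
    (∀ (r : ℝ) (u v : S → ℝ), 0 < r → (∀ i, 0 < u i) → (∀ i, 0 < v i) →
      Matrix.vecMul u A = r • u → A.mulVec v = r • v → (∑ i, u i * v i) = 1 →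
      ∀ μ : Measure (ℕ → S), IsProbabilityMeasure μ →
      (∀ (n : ℕ) (w : Fin (n + 1) → S),
        μ {x : ℕ → S | ∀ p : Fin (n + 1), x p = w p}
          = ENNReal.ofReal
              (u (w 0) * v (w (Fin.last n)) * (∏ p : Fin n, A (w p.castSucc) (w p.succ))
                / r ^ n)) →
      shiftKSEntropy μ = Real.log ((spectralRadius ℂ (A.map Complex.ofReal)).toReal)) := by
  have hA0 : ∀ i j, 0 ≤ A i j := fun i j => by rcases hA i j with h | h <;> simp [h]
  have hrow := row_has_one A hA hirr
  have hfrac : Tendsto (fun n : ℕ => ((n : ℝ) / (n + 1))) atTop (𝓝 1) := by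
    have h3 := tendsto_one_div_add_atTop_nhds_zero_nat (𝕜 := ℝ)
    have h4 : ∀ n : ℕ, (n : ℝ) / (n + 1) = 1 - 1 / ((n : ℝ) + 1) := by
      intro n
      have hne : ((n : ℝ) + 1) ≠ 0 := by positivity
      field_simp
      ring
    simp_rw [h4]
    simpa using tendsto_const_nhds.sub h3
  constructor
  · intro μ hμ _ hsupp
    haveI := hμ
    unfold shiftKSEntropy
    set a : ℕ → ℝ := fun n =>
      (∑ w : Fin n → S, Real.negMulLog (μ {x : ℕ → S | ∀ p : Fin n, x p = w p}).toReal) / n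
      with ha
    have hanonneg : ∀ n, 0 ≤ a n := by
      intro n
      apply div_nonneg _ (Nat.cast_nonneg n)
      apply Finset.sum_nonneg
      intro w _
      apply Real.negMulLog_nonneg ENNReal.toReal_nonneg
      have h := prob_le_one (μ := μ) (s := {x : ℕ → S | ∀ p : Fin n, x (p : ℕ) = w p})
      have h2 := ENNReal.toReal_mono ENNReal.one_ne_top h
      simpa using h2
    have hXAmeas : MeasurableSet {x : ℕ → S | ∀ k, A (x k) (x (k + 1)) = 1} := by
      have heq : {x : ℕ → S | ∀ k, A (x k) (x (k + 1)) = 1}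
          = ⋂ k : ℕ, (fun x : ℕ → S => (x k, x (k + 1))) ⁻¹' {q : S × S | A q.1 q.2 = 1} := by
        ext x; simp [Set.mem_iInter]
      rw [heq]
      exact MeasurableSet.iInter fun k =>
        ((measurable_pi_apply k).prodMk (measurable_pi_apply (k + 1)))
          ((Set.toFinite _).measurableSet)
    have hcompl : μ {x : ℕ → S | ∀ k, A (x k) (x (k + 1)) = 1}ᶜ = 0 := by
      rw [measure_compl hXAmeas (measure_ne_top μ _), hsupp, measure_univ, tsub_self]
    have hkey : ∀ n : ℕ, a (n + 1) ≤ Real.log (∑ i, ∑ j, (A ^ n) i j) / ((n : ℝ) + 1) := by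
      intro n
      set T : Finset (Fin (n + 1) → S) :=
        Finset.univ.filter (fun w => ∀ p : Fin n, A (w p.castSucc) (w p.succ) = 1) with hT
      have hzero : ∀ w : Fin (n + 1) → S, w ∉ T →
          μ {x : ℕ → S | ∀ p : Fin (n + 1), x p = w p} = 0 := by
        intro w hw
        apply measure_mono_null _ hcompl
        intro x hx
        simp only [Set.mem_setOf_eq] at hx
        simp only [hT, Finset.mem_filter, Finset.mem_univ, true_and, not_forall] at hw
        obtain ⟨p, hp⟩ := hw
        simp only [Set.mem_compl_iff, Set.mem_setOf_eq, not_forall]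
        refine ⟨(p : ℕ), ?_⟩
        have h1 : x (p : ℕ) = w p.castSucc := by
          have h := hx p.castSucc
          rwa [Fin.coe_castSucc] at h
        have h2 : x ((p : ℕ) + 1) = w p.succ := by
          have h := hx p.succ
          rwa [Fin.val_succ] at h
        rw [h1, h2]; exact hp
      have hrestrict : (∑ w : Fin (n + 1) → S,
          Real.negMulLog (μ {x : ℕ → S | ∀ p : Fin (n + 1), x p = w p}).toReal)
          = ∑ w ∈ T, Real.negMulLog (μ {x : ℕ → S | ∀ p : Fin (n + 1), x p = w p}).toReal := by
        symm
        apply Finset.sum_subset (Finset.subset_univ T)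
        intro w _ hw
        rw [hzero w hw]
        simp
      have hpsum : ∑ w ∈ T, (μ {x : ℕ → S | ∀ p : Fin (n + 1), x p = w p}).toReal = 1 := by
        have h1 : ∑ w : Fin (n + 1) → S,
            (μ {x : ℕ → S | ∀ p : Fin (n + 1), x p = w p}).toReal = 1 := by
          rw [← ENNReal.toReal_sum (fun w _ => measure_ne_top μ _), sum_measure_cyl μ (n + 1),
            ENNReal.toReal_one]
        rw [← h1]
        apply Finset.sum_subset (Finset.subset_univ T)
        intro w _ hw
        rw [hzero w hw]
        simp
      have hjensen := sum_negMulLog_le_log_card T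
        (fun w => (μ {x : ℕ → S | ∀ p : Fin (n + 1), x p = w p}).toReal)
        (fun w _ => ENNReal.toReal_nonneg) hpsum
      have hTne : T.Nonempty := by
        by_contra h
        rw [Finset.not_nonempty_iff_eq_empty] at h
        rw [h] at hpsum
        simp at hpsum
      have hcard : (T.card : ℝ) ≤ ∑ i, ∑ j, (A ^ n) i j := by
        rw [← sum_prod_all A n]
        calc (T.card : ℝ) = ∑ _w ∈ T, (1 : ℝ) := by simp
          _ = ∑ w ∈ T, ∏ p : Fin n, A (w p.castSucc) (w p.succ) := by
              apply Finset.sum_congr rfl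
              intro w hw
              simp only [hT, Finset.mem_filter, Finset.mem_univ, true_and] at hw
              rw [Finset.prod_congr rfl (fun p _ => hw p), Finset.prod_const_one]
          _ ≤ ∑ w : Fin (n + 1) → S, ∏ p : Fin n, A (w p.castSucc) (w p.succ) := by
              apply Finset.sum_le_sum_of_subset_of_nonneg (Finset.subset_univ T)
              intro w _ _
              exact Finset.prod_nonneg fun p _ => hA0 _ _
      have hlogcard : Real.log T.card ≤ Real.log (∑ i, ∑ j, (A ^ n) i j) :=
        Real.log_le_log (by exact_mod_cast hTne.card_pos) hcard
      show (∑ w : Fin (n + 1) → S,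
          Real.negMulLog (μ {x : ℕ → S | ∀ p : Fin (n + 1), x p = w p}).toReal) / ((n + 1 : ℕ) : ℝ)
          ≤ Real.log (∑ i, ∑ j, (A ^ n) i j) / ((n : ℝ) + 1)
      push_cast
      rw [hrestrict]
      have hdenpos : (0 : ℝ) < (n : ℝ) + 1 := by positivity
      exact (div_le_div_iff_of_pos_right hdenpos).mpr (hjensen.trans hlogcard)
    have hg : Tendsto (fun n : ℕ => Real.log (∑ i, ∑ j, (A ^ n) i j) / ((n : ℝ) + 1)) atTop
        (𝓝 (Real.log ((spectralRadius ℂ (A.map Complex.ofReal)).toReal))) := by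
      have h1 := tendsto_log_total A hA0 hrow
      have h2 := h1.mul hfrac
      rw [mul_one] at h2
      apply h2.congr'
      filter_upwards [eventually_ge_atTop 1] with n hn
      have hn0 : (n : ℝ) ≠ 0 := by
        have : (1 : ℝ) ≤ (n : ℝ) := by exact_mod_cast hn
        linarith
      have hn1 : ((n : ℝ) + 1) ≠ 0 := by positivity
      field_simp
    have hshift : limsup a atTop = limsup (fun n => a (n + 1)) atTop := by
      conv_lhs => rw [← Filter.map_add_atTop_eq_nat 1]
      rw [limsup, limsup, Filter.map_map]
      rfl
    rw [hshift]
    calc limsup (fun n => a (n + 1)) atTop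
        ≤ limsup (fun n : ℕ => Real.log (∑ i, ∑ j, (A ^ n) i j) / ((n : ℝ) + 1)) atTop := by
          refine limsup_le_limsup (Eventually.of_forall hkey) ?_ ?_
          · exact isCoboundedUnder_le_of_eventually_le atTop
              (Eventually.of_forall (fun n => hanonneg (n + 1)))
          · exact hg.isBoundedUnder_le
      _ = Real.log ((spectralRadius ℂ (A.map Complex.ofReal)).toReal) := hg.limsup_eq
  · intro r u v hr hu hv hAu hAv huv μ hμ hform
    haveI := hμ
    have hspec : (spectralRadius ℂ (A.map Complex.ofReal)).toReal = r := by
      rw [specrad_eq A hA0 r u v hr hu hv hAu hAv, ENNReal.toReal_ofReal hr.le]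
    rw [hspec]
    unfold shiftKSEntropy
    set a : ℕ → ℝ := fun n =>
      (∑ w : Fin n → S, Real.negMulLog (μ {x : ℕ → S | ∀ p : Fin n, x p = w p}).toReal) / n
      with ha
    set C : ℝ := ∑ i, ∑ j, |Real.log (u i * v j)| with hC
    have hbound : ∀ n : ℕ,
        ((n : ℝ) * Real.log r - C) / ((n : ℝ) + 1) ≤ a (n + 1)
        ∧ a (n + 1) ≤ ((n : ℝ) * Real.log r + C) / ((n : ℝ) + 1) := by
      intro n
      set p : (Fin (n + 1) → S) → ℝ := fun w =>
        u (w 0) * v (w (Fin.last n)) * (∏ q : Fin n, A (w q.castSucc) (w q.succ)) / r ^ n with hp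
      have hp0 : ∀ w, 0 ≤ p w := fun w =>
        div_nonneg (mul_nonneg (mul_nonneg (hu _).le (hv _).le)
          (Finset.prod_nonneg fun q _ => hA0 _ _)) (pow_nonneg hr.le n)
      have htoReal : ∀ w : Fin (n + 1) → S,
          (μ {x : ℕ → S | ∀ q : Fin (n + 1), x q = w q}).toReal = p w := fun w => by
        rw [hform n w, ENNReal.toReal_ofReal (hp0 w)]
      have hpsum : ∑ w : Fin (n + 1) → S, p w = 1 := by
        have h1 := sum_measure_cyl μ (n + 1)
        have h2 : ∑ w : Fin (n + 1) → S, μ {x : ℕ → S | ∀ q : Fin (n + 1), x q = w q}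
            = ENNReal.ofReal (∑ w : Fin (n + 1) → S, p w) := by
          rw [ENNReal.ofReal_sum_of_nonneg (fun w _ => hp0 w)]
          exact Finset.sum_congr rfl fun w _ => hform n w
        rw [h2] at h1
        have h3 := congrArg ENNReal.toReal h1
        rwa [ENNReal.toReal_ofReal (Finset.sum_nonneg fun w _ => hp0 w),
          ENNReal.toReal_one] at h3
      have hsplit : ∀ w : Fin (n + 1) → S, Real.negMulLog (p w)
          = p w * ((n : ℝ) * Real.log r) - p w * Real.log (u (w 0) * v (w (Fin.last n))) := by
        intro w
        by_cases hall : ∀ q : Fin n, A (w q.castSucc) (w q.succ) = 1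
        · have hprod : (∏ q : Fin n, A (w q.castSucc) (w q.succ)) = 1 :=
            Finset.prod_eq_one fun q _ => hall q
          have hpw : p w = u (w 0) * v (w (Fin.last n)) / r ^ n := by
            rw [hp]; simp only; rw [hprod, mul_one]
          have hpos : 0 < u (w 0) * v (w (Fin.last n)) := mul_pos (hu _) (hv _)
          rw [Real.negMulLog, hpw, Real.log_div hpos.ne' (pow_ne_zero n hr.ne'),
            Real.log_pow]
          push_cast
          ring
        · obtain ⟨q, hq⟩ := not_forall.mp hall
          have hq0 : A (w q.castSucc) (w q.succ) = 0 := (hA _ _).resolve_right hq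
          have hprod : (∏ q : Fin n, A (w q.castSucc) (w q.succ)) = 0 :=
            Finset.prod_eq_zero (Finset.mem_univ q) hq0
          have hpw : p w = 0 := by rw [hp]; simp only; rw [hprod, mul_zero, zero_div]
          rw [hpw, Real.negMulLog_zero]
          ring
      have hCw : ∀ w : Fin (n + 1) → S, |Real.log (u (w 0) * v (w (Fin.last n)))| ≤ C := by
        intro w
        calc |Real.log (u (w 0) * v (w (Fin.last n)))|
            ≤ ∑ j, |Real.log (u (w 0) * v j)| :=
              Finset.single_le_sum (f := fun j => |Real.log (u (w 0) * v j)|)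
                (fun j _ => abs_nonneg _) (Finset.mem_univ _)
          _ ≤ C :=
              Finset.single_le_sum (f := fun i => ∑ j, |Real.log (u i * v j)|)
                (fun i _ => Finset.sum_nonneg fun j _ => abs_nonneg _) (Finset.mem_univ _)
      have hE : |∑ w : Fin (n + 1) → S, p w * Real.log (u (w 0) * v (w (Fin.last n)))| ≤ C := by
        calc |∑ w : Fin (n + 1) → S, p w * Real.log (u (w 0) * v (w (Fin.last n)))|
            ≤ ∑ w : Fin (n + 1) → S, |p w * Real.log (u (w 0) * v (w (Fin.last n)))| :=
              Finset.abs_sum_le_sum_abs _ _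
          _ = ∑ w : Fin (n + 1) → S, p w * |Real.log (u (w 0) * v (w (Fin.last n)))| := by
              apply Finset.sum_congr rfl
              intro w _
              rw [abs_mul, abs_of_nonneg (hp0 w)]
          _ ≤ ∑ w : Fin (n + 1) → S, p w * C :=
              Finset.sum_le_sum fun w _ => mul_le_mul_of_nonneg_left (hCw w) (hp0 w)
          _ = C := by rw [← Finset.sum_mul, hpsum, one_mul]
      have hH : (∑ w : Fin (n + 1) → S,
          Real.negMulLog (μ {x : ℕ → S | ∀ q : Fin (n + 1), x q = w q}).toReal)
          = (n : ℝ) * Real.log r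
            - ∑ w : Fin (n + 1) → S, p w * Real.log (u (w 0) * v (w (Fin.last n))) := by
        simp_rw [htoReal, hsplit]
        rw [Finset.sum_sub_distrib, ← Finset.sum_mul, hpsum, one_mul]
      have hdenpos : (0 : ℝ) < (n : ℝ) + 1 := by positivity
      have haeq : a (n + 1) = ((n : ℝ) * Real.log r
          - ∑ w : Fin (n + 1) → S, p w * Real.log (u (w 0) * v (w (Fin.last n))))
          / ((n : ℝ) + 1) := by
        show (∑ w : Fin (n + 1) → S,
            Real.negMulLog (μ {x : ℕ → S | ∀ q : Fin (n + 1), x q = w q}).toReal)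
            / ((n + 1 : ℕ) : ℝ) = _
        rw [hH]
        push_cast
        rfl
      obtain ⟨hE1, hE2⟩ := abs_le.mp hE
      constructor
      · rw [haeq]
        exact (div_le_div_iff_of_pos_right hdenpos).mpr (by linarith)
      · rw [haeq]
        exact (div_le_div_iff_of_pos_right hdenpos).mpr (by linarith)
    have hlow : Tendsto (fun n : ℕ => ((n : ℝ) * Real.log r - C) / ((n : ℝ) + 1)) atTop
        (𝓝 (Real.log r)) := by
      have h4 : ∀ n : ℕ, ((n : ℝ) * Real.log r - C) / ((n : ℝ) + 1)
          = Real.log r * ((n : ℝ) / ((n : ℝ) + 1)) - C * (1 / ((n : ℝ) + 1)) := by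
        intro n
        have hne : ((n : ℝ) + 1) ≠ 0 := by positivity
        field_simp
      simp_rw [h4]
      have h5 := (tendsto_const_nhds (x := Real.log r) (f := atTop (α := ℕ))).mul hfrac
      have h6 := (tendsto_const_nhds (x := C) (f := atTop (α := ℕ))).mul
        tendsto_one_div_add_atTop_nhds_zero_nat
      have h7 := h5.sub h6
      simpa using h7
    have hhigh : Tendsto (fun n : ℕ => ((n : ℝ) * Real.log r + C) / ((n : ℝ) + 1)) atTop
        (𝓝 (Real.log r)) := by
      have h4 : ∀ n : ℕ, ((n : ℝ) * Real.log r + C) / ((n : ℝ) + 1)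
          = Real.log r * ((n : ℝ) / ((n : ℝ) + 1)) + C * (1 / ((n : ℝ) + 1)) := by
        intro n
        have hne : ((n : ℝ) + 1) ≠ 0 := by positivity
        field_simp
      simp_rw [h4]
      have h5 := (tendsto_const_nhds (x := Real.log r) (f := atTop (α := ℕ))).mul hfrac
      have h6 := (tendsto_const_nhds (x := C) (f := atTop (α := ℕ))).mul
        tendsto_one_div_add_atTop_nhds_zero_nat
      have h7 := h5.add h6
      simpa using h7
    have htend : Tendsto (fun n : ℕ => a (n + 1)) atTop (𝓝 (Real.log r)) :=
      tendsto_of_tendsto_of_tendsto_of_le_of_le hlow hhigh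
        (fun n => (hbound n).1) (fun n => (hbound n).2)
    have hshift : limsup a atTop = limsup (fun n => a (n + 1)) atTop := by
      conv_lhs => rw [← Filter.map_add_atTop_eq_nat 1]
      rw [limsup, limsup, Filter.map_map]
      rfl
    rw [hshift, htend.limsup_eq]
end
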